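/- Fix y : ℕ. The function f : ℕ → ℕ defined by f(0) = y and f(x+1) = f(x) - (ℓ(x+1) - ℓ(x))·⌈f(x)/2⌉ satisfies f(x) = ⌊y / 2^{ℓ(x)}⌋ for all x, where ⌈z/2⌉ means z - ⌊z/2⌋. -/
import Mathlib


def ell (x : ℕ) : ℕ := Nat.clog 2 (x + 1)

lemma ell_succ_le (x : ℕ) : ell (x + 1) ≤ ell x + 1 := by
  unfold ell
  rw [Nat.clog_of_two_le (by norm_num) (by omega)]
  have : (x + 2 + 1) / 2 ≤ x + 1 := by omega
  exact Nat.add_le_add_right (Nat.clog_mono_right 2 this) 1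

lemma ell_mono (x : ℕ) : ell x ≤ ell (x + 1) :=
  Nat.clog_mono_right 2 (by omega)

/-- The ℓ-ODE₃ schema computes the log most significant part `⌊y / 2^{ℓ(x)}⌋`. -/
theorem msp_via_ODE3 (y : ℕ) (f : ℕ → ℕ) (h0 : f 0 = y)
    (hrec : ∀ x, f (x + 1) = f x - (ell (x + 1) - ell x) * (f x - f x / 2)) :
    ∀ x, f x = y / 2 ^ ell x := by
  intro x
  induction x with
  | zero => simp [h0, ell]
  | succ n ih =>
    have hle := ell_succ_le n
    have hge := ell_mono n
    rcases (by omega : ell (n + 1) = ell n ∨ ell (n + 1) = ell n + 1) with h | h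
    · rw [hrec n, h, ih, Nat.sub_self, zero_mul, Nat.sub_zero]
    · rw [hrec n, h, ih]
      have h2 : y / 2 ^ ell n / 2 ≤ y / 2 ^ ell n := Nat.div_le_self _ _
      rw [show ell n + 1 - ell n = 1 by omega, one_mul,
        Nat.sub_sub_self h2, pow_succ, Nat.div_div_eq_div_mul]
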